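/- Every graph in which the neighborhood of every vertex induces a disjoint union of at most two cliques is a line graph. -/

import Mathlib

open SimpleGraph

/-- `G` is a line graph if it is isomorphic to the line graph of some graph. -/
def IsLineGraph {V : Type u} (G : SimpleGraph V) : Prop :=
  ∃ (W : Type u) (H : SimpleGraph W), Nonempty (G ≃g H.lineGraph)

/-- The neighborhood of `v` in `G` induces a disjoint union of at most two cliques:
it can be partitioned into two (possibly empty) cliques with no edges between them. -/
def NbhdTwoCliques {V : Type u} (G : SimpleGraph V) (v : V) : Prop :=
  ∃ A B : Set V, G.neighborSet v = A ∪ B ∧ Disjoint A B ∧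
    G.IsClique A ∧ G.IsClique B ∧ ∀ a ∈ A, ∀ b ∈ B, ¬ G.Adj a b

namespace LG

variable {V : Type u}

open Classical in
/-- Token for the part `C v b` of vertex `v`: the clique `{v} ∪ C v b` if the part is
nonempty, and a fresh pendant vertex otherwise. -/
noncomputable def token (C : V → Bool → Set V) (v : V) (b : Bool) : Set V ⊕ (V × Bool) :=
  if (C v b).Nonempty then Sum.inl (insert v (C v b)) else Sum.inr (v, b)

/-- The root graph: each vertex `v` of `G` contributes the edge between its two tokens. -/
noncomputable def Hgraph (C : V → Bool → Set V) : SimpleGraph (Set V ⊕ (V × Bool)) where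
  Adj s t := s ≠ t ∧ ∃ v, (s = token C v false ∧ t = token C v true) ∨
      (s = token C v true ∧ t = token C v false)
  symm := ⟨by
    rintro s t ⟨hne, v, h⟩
    exact ⟨hne.symm, v, by tauto⟩⟩
  loopless := ⟨fun s h => h.1 rfl⟩

variable {G : SimpleGraph V} {C : V → Bool → Set V}

lemma part_subset {v u : V} {P P' Q Q' : Set V}
    (hv : G.neighborSet v = P ∪ P') (hP : G.IsClique P)
    (hu : G.neighborSet u = Q ∪ Q')
    (hux : ∀ a ∈ Q, ∀ x ∈ Q', ¬ G.Adj a x)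
    (huP : u ∈ P) (hvQ : v ∈ Q) :
    insert v P ⊆ insert u Q := by
  intro x hx
  rcases Set.mem_insert_iff.mp hx with rfl | hxP
  · exact Set.mem_insert_of_mem _ hvQ
  by_cases hxu : x = u
  · exact hxu ▸ Set.mem_insert _ _
  have hadj : G.Adj x u := hP hxP huP hxu
  have hxNu : x ∈ G.neighborSet u := hadj.symm
  have hvadjx : G.Adj v x := by
    have : x ∈ G.neighborSet v := by rw [hv]; exact Or.inl hxP
    exact this
  rw [hu] at hxNu
  rcases hxNu with hxQ | hxQ'
  · exact Set.mem_insert_of_mem _ hxQ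
  · exact absurd hvadjx (hux v hvQ x hxQ')

section Hyps

variable (hN : ∀ v, G.neighborSet v = C v false ∪ C v true)
    (hclique : ∀ v b, G.IsClique (C v b))
    (hdisj : ∀ v, Disjoint (C v false) (C v true))
    (hcross : ∀ v b, ∀ a ∈ C v b, ∀ x ∈ C v (!b), ¬ G.Adj a x)

include hN in
lemma hN' (v : V) (b : Bool) : G.neighborSet v = C v b ∪ C v (!b) := by
  cases b
  · simpa using hN v
  · simp only [Bool.not_true]; rw [hN v, Set.union_comm]

include hN in
lemma mem_adj {v u : V} {b : Bool} (h : u ∈ C v b) : G.Adj v u := by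
  have : u ∈ G.neighborSet v := by rw [hN' hN v b]; exact Or.inl h
  exact this

include hN hdisj in
lemma token_ne (v : V) : token C v false ≠ token C v true := by
  unfold token
  split_ifs with h1 h2 h2
  · intro h
    have h' := Sum.inl.inj h
    obtain ⟨a, ha⟩ := h1
    have hne : a ≠ v := (mem_adj hN ha).ne'
    have : a ∈ insert v (C v true) := h' ▸ Set.mem_insert_of_mem _ ha
    rcases Set.mem_insert_iff.mp this with rfl | hmem
    · exact hne rfl
    · exact Set.disjoint_left.mp (hdisj v) ha hmem
  · simp
  · simp
  · intro h
    simpa using Sum.inr.inj h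

include hN hclique hcross in
lemma key {v u : V} {b : Bool} (h : u ∈ C v b) :
    ∃ b', v ∈ C u b' ∧ insert v (C v b) = insert u (C u b') := by
  have hadj : G.Adj u v := (mem_adj hN h).symm
  have hv : v ∈ C u false ∪ C u true := by rw [← hN]; exact hadj
  have : ∃ b', v ∈ C u b' := by
    rcases hv with h' | h'
    exacts [⟨false, h'⟩, ⟨true, h'⟩]
  obtain ⟨b', hv'⟩ := this
  refine ⟨b', hv', Set.Subset.antisymm ?_ ?_⟩
  · exact part_subset (hN' hN v b) (hclique v b) (hN' hN u b') (hcross u b') h hv'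
  · exact part_subset (hN' hN u b') (hclique u b') (hN' hN v b) (hcross v b) hv' h

lemma token_eq_mem {v w : V} {b b' : Bool} (h : token C v b = token C w b') :
    v = w ∨ v ∈ insert w (C w b') := by
  unfold token at h
  split_ifs at h with h1 h2 h2 <;>
    first
    | (right; rw [← Sum.inl.inj h]; exact Set.mem_insert _ _)
    | exact Or.inl (congrArg Prod.fst (Sum.inr.inj h))
    | simp at h

include hdisj in
lemma resolve {v w : V} (hvw : v ≠ w)
    (m1 : v = w ∨ v ∈ insert w (C w false)) (m2 : v = w ∨ v ∈ insert w (C w true)) : False := by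
  rcases m1 with rfl | m1
  · exact hvw rfl
  rcases m2 with rfl | m2
  · exact hvw rfl
  rcases Set.mem_insert_iff.mp m1 with rfl | m1
  · exact hvw rfl
  rcases Set.mem_insert_iff.mp m2 with rfl | m2
  · exact hvw rfl
  exact Set.disjoint_left.mp (hdisj w) m1 m2

include hN hclique hdisj hcross in
lemma main : IsLineGraph G := by
  classical
  have hmem : ∀ v, (Hgraph C).Adj (token C v false) (token C v true) :=
    fun v => ⟨token_ne hN hdisj v, v, Or.inl ⟨rfl, rfl⟩⟩
  let φ : V → (Hgraph C).edgeSet :=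
    fun v => ⟨s(token C v false, token C v true), (Hgraph C).mem_edgeSet.mpr (hmem v)⟩
  have hinj : Function.Injective φ := by
    intro v w h
    have h2 : s(token C v false, token C v true) = s(token C w false, token C w true) :=
      congrArg Subtype.val h
    rw [Sym2.eq_iff] at h2
    by_contra hvw
    rcases h2 with ⟨e1, e2⟩ | ⟨e1, e2⟩
    · exact resolve hdisj hvw (token_eq_mem e1) (token_eq_mem e2)
    · exact resolve hdisj hvw (token_eq_mem e2) (token_eq_mem e1)
  have hsurj : Function.Surjective φ := by
    rintro ⟨e, he⟩
    induction e using Sym2.ind with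
    | _ a b =>
      rw [mem_edgeSet] at he
      obtain ⟨hne, v, hcase⟩ := he
      refine ⟨v, Subtype.ext ?_⟩
      rcases hcase with ⟨rfl, rfl⟩ | ⟨rfl, rfl⟩
      · rfl
      · exact Sym2.eq_swap
  refine ⟨Set V ⊕ (V × Bool), Hgraph C, ⟨⟨Equiv.ofBijective φ ⟨hinj, hsurj⟩, ?_⟩⟩⟩
  intro v w
  show (Hgraph C).lineGraph.Adj (φ v) (φ w) ↔ G.Adj v w
  constructor
  · intro h
    rw [lineGraph_adj_iff_exists] at h
    obtain ⟨hne, x, hx1, hx2⟩ := h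
    have hvw : v ≠ w := fun h' => hne (by rw [h'])
    have final : ∀ (b b' : Bool), token C v b = token C w b' → G.Adj v w := by
      intro b b' heq
      rcases token_eq_mem heq with rfl | hm
      · exact absurd rfl hvw
      rcases Set.mem_insert_iff.mp hm with rfl | hm
      · exact absurd rfl hvw
      · exact (mem_adj hN hm).symm
    simp only [φ, Sym2.mem_iff] at hx1 hx2
    rcases hx1 with rfl | rfl <;> rcases hx2 with h2 | h2
    · exact final _ _ h2
    · exact final _ _ h2
    · exact final _ _ h2
    · exact final _ _ h2
  · intro hadj
    have hw : w ∈ C v false ∪ C v true := by rw [← hN]; exact hadj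
    have : ∃ b, w ∈ C v b := by
      rcases hw with h' | h'
      exacts [⟨false, h'⟩, ⟨true, h'⟩]
    obtain ⟨b, hwb⟩ := this
    obtain ⟨b', hvb', heq⟩ := key hN hclique hcross hwb
    have htok : token C v b = token C w b' := by
      unfold token
      rw [if_pos ⟨w, hwb⟩, if_pos ⟨v, hvb'⟩, heq]
    rw [lineGraph_adj_iff_exists]
    refine ⟨fun hc => hadj.ne (hinj hc), token C v b, ?_, ?_⟩
    · show token C v b ∈ s(token C v false, token C v true)
      rw [Sym2.mem_iff]
      cases b
      · exact Or.inl rfl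
      · exact Or.inr rfl
    · show token C v b ∈ s(token C w false, token C w true)
      rw [htok, Sym2.mem_iff]
      cases b'
      · exact Or.inl rfl
      · exact Or.inr rfl

end Hyps

end LG

/-- Every graph in which the neighborhood of every vertex induces a disjoint union of
at most two cliques is a line graph. -/
theorem stmt1 {V : Type u} (G : SimpleGraph V) (h : ∀ v : V, NbhdTwoCliques G v) :
    IsLineGraph G := by
  classical
  choose A B hAB hdisj hA hB hcross using h
  apply LG.main (C := fun v b => if b then B v else A v)
  · intro v; simpa using hAB v
  · intro v b; cases b
    · simpa using hA v
    · simpa using hB v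
  · intro v; simpa using hdisj v
  · intro v b; cases b
    · simpa using hcross v
    · intro a ha x hx hadj
      simp only [Bool.not_true, if_neg, if_pos] at ha hx
      exact hcross v x (by simpa using hx) a (by simpa using ha) hadj.symm
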